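/- Let V be a quadratic space over a non-archimedean local field F (residue characteristic ≠ 2) decomposed as an orthogonal sum V = V₁ ⊥ V₂. A self-dual norm α on V is split by this decomposition (i.e., α = α|_{V₁} ∧ α|_{V₂}) if and only if the restrictions α|_{V₁} and α|_{V₂} are self-dual norms on V₁ and V₂ respectively. -/

import Mathlib

open scoped Classical

noncomputable section

/-- A (normalized surjective) discrete valuation on `F`, as an additive `ℤ`-valued
valuation on nonzero elements. -/
def IsVal (F : Type*) [Field F] (val : F → ℤ) : Prop :=
  (∀ a b : F, a ≠ 0 → b ≠ 0 → val (a * b) = val a + val b) ∧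
  (∀ a b : F, a ≠ 0 → b ≠ 0 → a + b ≠ 0 → min (val a) (val b) ≤ val (a + b)) ∧
  (∀ n : ℤ, ∃ a : F, a ≠ 0 ∧ val a = n)

variable {F : Type*} [Field F] {V : Type*} [AddCommGroup V] [Module F V]

/-- A norm on `V` (valued in `ℝ ∪ {∞}`, with `α(x) = ∞ ↔ x = 0`). -/
def IsNorm (val : F → ℤ) (α : V → WithTop ℝ) : Prop :=
  (∀ x : V, α x = ⊤ ↔ x = 0) ∧
  (∀ x y : V, min (α x) (α y) ≤ α (x + y)) ∧
  (∀ (a : F) (x : V), a ≠ 0 → α (a • x) = ((val a : ℝ) : WithTop ℝ) + α x)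

/-- A norm on a subspace `W` of `V`. -/
def IsNormOn (val : F → ℤ) (W : Submodule F V) (α : V → WithTop ℝ) : Prop :=
  (∀ x ∈ W, (α x = ⊤ ↔ x = 0)) ∧
  (∀ x ∈ W, ∀ y ∈ W, min (α x) (α y) ≤ α (x + y)) ∧
  (∀ (a : F), ∀ x ∈ W, a ≠ 0 → α (a • x) = ((val a : ℝ) : WithTop ℝ) + α x)

/-- The dual norm `α*(v) = inf_x (v_F(f(v,x)) - α(x))`, the infimum being taken over
the `x` giving finite terms. -/
def dualNorm (val : F → ℤ) (f : V → V → F) (α : V → WithTop ℝ) (v : V) : WithTop ℝ :=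
  if (∃ x : V, f v x ≠ 0) then
    ((sInf {r : ℝ | ∃ x : V, ∃ s : ℝ, f v x ≠ 0 ∧ α x = (s : WithTop ℝ) ∧
        r = (val (f v x) : ℝ) - s} : ℝ) : WithTop ℝ)
  else ⊤

/-- Self-duality of a norm with respect to `f`. -/
def IsSelfDual (val : F → ℤ) (f : V → V → F) (α : V → WithTop ℝ) : Prop :=
  ∀ v : V, dualNorm val f α v = α v

/-- The dual (sharp) norm with the infimum restricted to pairing against a subspace `W`:
`α^♯(v) = inf_{x ∈ W} (v_F(f(v,x)) - α(x))`. -/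
def dualNormOn (val : F → ℤ) (f : V → V → F) (W : Submodule F V)
    (α : V → WithTop ℝ) (v : V) : WithTop ℝ :=
  if (∃ x ∈ W, f v x ≠ 0) then
    ((sInf {r : ℝ | ∃ x ∈ W, ∃ s : ℝ, f v x ≠ 0 ∧ α x = (s : WithTop ℝ) ∧
        r = (val (f v x) : ℝ) - s} : ℝ) : WithTop ℝ)
  else ⊤

end

section Aux

variable {F : Type*} [Field F] {V : Type*} [AddCommGroup V] [Module F V]

/-- The set over which the infimum in `dualNorm` is taken. -/
private def Sset (val : F → ℤ) (f : LinearMap.BilinForm F V) (α : V → WithTop ℝ) (v : V) :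
    Set ℝ :=
  {r : ℝ | ∃ x : V, ∃ s : ℝ, f v x ≠ 0 ∧ α x = (s : WithTop ℝ) ∧
      r = (val (f v x) : ℝ) - s}

/-- The set over which the infimum in `dualNormOn` is taken. -/
private def Tset (val : F → ℤ) (f : LinearMap.BilinForm F V) (W : Submodule F V)
    (α : V → WithTop ℝ) (v : V) : Set ℝ :=
  {r : ℝ | ∃ x ∈ W, ∃ s : ℝ, f v x ≠ 0 ∧ α x = (s : WithTop ℝ) ∧
      r = (val (f v x) : ℝ) - s}

private lemma dn_eq (val : F → ℤ) (f : LinearMap.BilinForm F V) (α : V → WithTop ℝ) (v : V) :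
    dualNorm val (fun x y => f x y) α v =
      if (∃ x : V, f v x ≠ 0) then ((sInf (Sset val f α v) : ℝ) : WithTop ℝ) else ⊤ := rfl

private lemma dnOn_eq (val : F → ℤ) (f : LinearMap.BilinForm F V) (W : Submodule F V)
    (α : V → WithTop ℝ) (v : V) :
    dualNormOn val (fun x y => f x y) W α v =
      if (∃ x ∈ W, f v x ≠ 0) then ((sInf (Tset val f W α v) : ℝ) : WithTop ℝ) else ⊤ := rfl

private lemma alpha_zero (val : F → ℤ) (f : LinearMap.BilinForm F V) (α : V → WithTop ℝ)
    (hsd : IsSelfDual val (fun x y => f x y) α) (w : V)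
    (hb : ¬ BddBelow (Sset val f α w)) : α w = ((0 : ℝ) : WithTop ℝ) := by
  have hSne : (Sset val f α w).Nonempty := by
    by_contra h
    rw [Set.not_nonempty_iff_eq_empty] at h
    exact hb (h ▸ bddBelow_empty)
  have hne : ∃ x : V, f w x ≠ 0 := by
    rcases hSne with ⟨r, x, s, hfx, _, _⟩
    exact ⟨x, hfx⟩
  have h := hsd w
  rw [dn_eq, if_pos hne, Real.sInf_of_not_bddBelow hb] at h
  exact h.symm

private lemma bdd_S (val : F → ℤ) (hval : IsVal F val) (f : LinearMap.BilinForm F V)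
    (α : V → WithTop ℝ) (hα : IsNorm val α)
    (hsd : IsSelfDual val (fun x y => f x y) α) (v : V) :
    BddBelow (Sset val f α v) := by
  by_contra hb
  have h0 : α v = ((0 : ℝ) : WithTop ℝ) := alpha_zero val f α hsd v hb
  obtain ⟨a, ha, hva⟩ := hval.2.2 1
  have hb' : ¬ BddBelow (Sset val f α (a • v)) := by
    intro hbb
    apply hb
    obtain ⟨b, hbmem⟩ := hbb
    refine ⟨b - 1, ?_⟩
    rintro r ⟨x, s, hfx, hαx, hr⟩
    have hfax : f (a • v) x = a * f v x := by
      simp [map_smul, smul_eq_mul]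
    have hne : a * f v x ≠ 0 := mul_ne_zero ha hfx
    have hvalm : val (a * f v x) = 1 + val (f v x) := by
      rw [hval.1 a (f v x) ha hfx, hva]
    have hmem : r + 1 ∈ Sset val f α (a • v) := by
      refine ⟨x, s, ?_, hαx, ?_⟩
      · rw [hfax]; exact hne
      · rw [hfax, hvalm]; push_cast; linarith [hr]
    have := hbmem hmem
    linarith
  have h1 : α (a • v) = ((0 : ℝ) : WithTop ℝ) := alpha_zero val f α hsd _ hb'
  have h2 : α (a • v) = ((val a : ℝ) : WithTop ℝ) + α v := hα.2.2 a v ha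
  rw [h0, hva, h1, ← WithTop.coe_add] at h2
  have := WithTop.coe_eq_coe.mp h2
  norm_num at this

private lemma fwd (val : F → ℤ) (hval : IsVal F val) (f : LinearMap.BilinForm F V)
    (hnd : f.Nondegenerate) (W : Submodule F V) (π : V →ₗ[F] V) (hπW : ∀ x, π x ∈ W)
    (α : V → WithTop ℝ) (hα : IsNorm val α)
    (hsd : IsSelfDual val (fun x y => f x y) α)
    (hsplit : ∀ x, α x ≤ α (π x))
    (v : V) (hv0 : True) (hfv : ∀ x, f v x = f v (π x)) :
    dualNormOn val (fun x y => f x y) W α v = α v := by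
  by_cases hv : v = 0
  · subst hv
    have hno : ¬ ∃ x ∈ W, f (0 : V) x ≠ 0 := by simp
    rw [dnOn_eq, if_neg hno, (hα.1 (0 : V)).mpr rfl]
  obtain ⟨x0, hx0⟩ : ∃ x, f v x ≠ 0 := by
    by_contra h
    push_neg at h
    exact hv (hnd.1 v h)
  have hx0' : f v (π x0) ≠ 0 := by rw [← hfv]; exact hx0
  have hcondW : ∃ x ∈ W, f v x ≠ 0 := ⟨π x0, hπW x0, hx0'⟩
  have hScond : ∃ x, f v x ≠ 0 := ⟨x0, hx0⟩
  have hSbdd : BddBelow (Sset val f α v) := bdd_S val hval f α hα hsd v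
  have hfin : ∀ x : V, f v x ≠ 0 → ∃ s : ℝ, α x = (s : WithTop ℝ) := by
    intro x hx
    have hxne : x ≠ 0 := by rintro rfl; simp at hx
    have hxt : α x ≠ ⊤ := fun h => hxne ((hα.1 x).mp h)
    rcases WithTop.ne_top_iff_exists.mp hxt with ⟨s, hs⟩
    exact ⟨s, hs.symm⟩
  have hTS : Tset val f W α v ⊆ Sset val f α v := by
    rintro r ⟨x, hxW, s, hfx, hαx, hr⟩
    exact ⟨x, s, hfx, hαx, hr⟩
  have hTne : (Tset val f W α v).Nonempty := by
    obtain ⟨s, hs⟩ := hfin (π x0) hx0'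
    exact ⟨(val (f v (π x0)) : ℝ) - s, π x0, hπW x0, s, hx0', hs, rfl⟩
  have hSne : (Sset val f α v).Nonempty := hTne.mono hTS
  have hEq : sInf (Sset val f α v) = sInf (Tset val f W α v) := by
    apply le_antisymm
    · exact csInf_le_csInf hSbdd hTne hTS
    · apply le_csInf hSne
      rintro r ⟨x, s, hfx, hαx, hr⟩
      have hfπ : f v (π x) ≠ 0 := by rw [← hfv]; exact hfx
      obtain ⟨s', hs'⟩ := hfin (π x) hfπ
      have hss' : s ≤ s' := by
        have hle := hsplit x
        rw [hαx, hs'] at hle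
        exact WithTop.coe_le_coe.mp hle
      have hmem : (val (f v (π x)) : ℝ) - s' ∈ Tset val f W α v :=
        ⟨π x, hπW x, s', hfπ, hs', rfl⟩
      have h1 : sInf (Tset val f W α v) ≤ (val (f v (π x)) : ℝ) - s' :=
        csInf_le (hSbdd.mono hTS) hmem
      have h2 : (val (f v (π x)) : ℝ) - s' ≤ r := by
        rw [← hfv x, hr]; linarith
      linarith
  have hdn := hsd v
  rw [dn_eq, if_pos hScond] at hdn
  rw [dnOn_eq, if_pos hcondW, ← hEq, hdn]

private lemma bwd (val : F → ℤ) (hval : IsVal F val) (f : LinearMap.BilinForm F V)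
    (W : Submodule F V)
    (α : V → WithTop ℝ) (hα : IsNorm val α)
    (hsd : IsSelfDual val (fun x y => f x y) α)
    (v w : V) (hv : v ≠ 0) (hw : w ≠ 0)
    (hdual : dualNormOn val (fun x y => f x y) W α w = α w)
    (hfw : ∀ x ∈ W, f w x = f v x) :
    α v ≤ α w := by
  have hTeq : Tset val f W α w = Tset val f W α v := by
    ext r
    constructor
    · rintro ⟨x, hxW, s, hfx, hαx, hr⟩
      exact ⟨x, hxW, s, by rw [← hfw x hxW]; exact hfx, hαx, by rw [← hfw x hxW]; exact hr⟩
    · rintro ⟨x, hxW, s, hfx, hαx, hr⟩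
      exact ⟨x, hxW, s, by rw [hfw x hxW]; exact hfx, hαx, by rw [hfw x hxW]; exact hr⟩
  have hcond : ∃ x ∈ W, f w x ≠ 0 := by
    by_contra h
    rw [dnOn_eq, if_neg h] at hdual
    exact hw ((hα.1 w).mp hdual.symm)
  obtain ⟨x0, hx0W, hx0⟩ := hcond
  have hx0v : f v x0 ≠ 0 := by rw [← hfw x0 hx0W]; exact hx0
  have hScond : ∃ x, f v x ≠ 0 := ⟨x0, hx0v⟩
  have hSbdd : BddBelow (Sset val f α v) := bdd_S val hval f α hα hsd v
  have hTS : Tset val f W α v ⊆ Sset val f α v := by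
    rintro r ⟨x, hxW, s, h1, h2, h3⟩
    exact ⟨x, s, h1, h2, h3⟩
  have hTne : (Tset val f W α v).Nonempty := by
    have hx0ne : x0 ≠ 0 := by rintro rfl; simp at hx0v
    have hxt : α x0 ≠ ⊤ := fun h => hx0ne ((hα.1 x0).mp h)
    rcases WithTop.ne_top_iff_exists.mp hxt with ⟨s, hs⟩
    exact ⟨(val (f v x0) : ℝ) - s, x0, hx0W, s, hx0v, hs.symm, rfl⟩
  have hdn := hsd v
  rw [dn_eq, if_pos hScond] at hdn
  rw [dnOn_eq, if_pos ⟨x0, hx0W, hx0⟩, hTeq] at hdual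
  rw [← hdn, ← hdual]
  exact WithTop.coe_le_coe.mpr (csInf_le_csInf hSbdd hTne hTS)

end Aux

/-- for a quadratic space `V = V₁ ⊥ V₂` over a non-archimedean local
field of residue characteristic `≠ 2`, a self-dual norm `α` is split by the
decomposition if and only if its restrictions to `V₁` and `V₂` are self-dual. -/
theorem stmt11 {F : Type*} [Field F] {V : Type*} [AddCommGroup V] [Module F V]
    (val : F → ℤ) (hval : IsVal F val)
    (h2 : (2 : F) ≠ 0) (hval2 : val 2 = 0)
    (f : LinearMap.BilinForm F V) (hsymm : ∀ x y : V, f x y = f y x)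
    (hnd : f.Nondegenerate)
    (V1 V2 : Submodule F V) (hcompl : IsCompl V1 V2)
    (horth : ∀ x ∈ V1, ∀ y ∈ V2, f x y = 0)
    (π1 π2 : V →ₗ[F] V)
    (hπ1 : ∀ v : V, π1 v ∈ V1) (hπ2 : ∀ v : V, π2 v ∈ V2)
    (hπ : ∀ v : V, π1 v + π2 v = v)
    (α : V → WithTop ℝ) (hα : IsNorm val α)
    (hsd : IsSelfDual val (fun x y => f x y) α) :
    (∀ v : V, α v = min (α (π1 v)) (α (π2 v)))
      ↔ ((∀ v ∈ V1, dualNormOn val (fun x y => f x y) V1 α v = α v) ∧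
         (∀ v ∈ V2, dualNormOn val (fun x y => f x y) V2 α v = α v)) := by
  have hfv1 : ∀ v ∈ V1, ∀ x, f v x = f v (π1 x) := by
    intro v hv x
    conv_lhs => rw [← hπ x]
    rw [map_add, horth v hv (π2 x) (hπ2 x), add_zero]
  have hfv2 : ∀ v ∈ V2, ∀ x, f v x = f v (π2 x) := by
    intro v hv x
    conv_lhs => rw [← hπ x]
    rw [map_add, hsymm v (π1 x), horth (π1 x) (hπ1 x) v hv, zero_add]
  have hfw1 : ∀ v : V, ∀ x ∈ V1, f (π1 v) x = f v x := by
    intro v x hx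
    conv_rhs => rw [← hπ v]
    rw [map_add, LinearMap.add_apply, hsymm (π2 v) x, horth x hx (π2 v) (hπ2 v), add_zero]
  have hfw2 : ∀ v : V, ∀ x ∈ V2, f (π2 v) x = f v x := by
    intro v x hx
    conv_rhs => rw [← hπ v]
    rw [map_add, LinearMap.add_apply, horth (π1 v) (hπ1 v) x hx, zero_add]
  constructor
  · intro hs
    refine ⟨fun v hv => ?_, fun v hv => ?_⟩
    · exact fwd val hval f hnd V1 π1 hπ1 α hα hsd
        (fun x => (hs x).le.trans (min_le_left _ _)) v trivial (hfv1 v hv)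
    · exact fwd val hval f hnd V2 π2 hπ2 α hα hsd
        (fun x => (hs x).le.trans (min_le_right _ _)) v trivial (hfv2 v hv)
  · rintro ⟨h1, h2⟩ v
    have hmin : min (α (π1 v)) (α (π2 v)) ≤ α v := by
      have h := hα.2.1 (π1 v) (π2 v)
      rwa [hπ v] at h
    refine le_antisymm (le_min ?_ ?_) hmin
    · by_cases h : π1 v = 0
      · rw [h, (hα.1 (0 : V)).mpr rfl]; exact le_top
      · have hv0 : v ≠ 0 := by rintro rfl; exact h (map_zero π1)
        exact bwd val hval f V1 α hα hsd v (π1 v) hv0 h (h1 (π1 v) (hπ1 v)) (hfw1 v)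
    · by_cases h : π2 v = 0
      · rw [h, (hα.1 (0 : V)).mpr rfl]; exact le_top
      · have hv0 : v ≠ 0 := by rintro rfl; exact h (map_zero π2)
        exact bwd val hval f V2 α hα hsd v (π2 v) hv0 h (h2 (π2 v) (hπ2 v)) (hfw2 v)
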